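/- Let Ω be a nonempty finite type and let E = ⟨𝓔, mod⟩ be an epistemic space over Ω. If E satisfies (ZC), then there exists a linear contraction operator for E. -/
import Mathlib


open Set

/-- `minSet r S` is the set of `r`-minimal elements of `S`:
`min(S, r) = {ω ∈ S : r ω ω' for all ω' ∈ S}`. -/
def minSet {Ω : Type*} (r : Ω → Ω → Prop) (S : Set Ω) : Set Ω :=
  {ω ∈ S | ∀ ω' ∈ S, r ω ω'}

/-- A linear order as a relation: total, antisymmetric and transitive. -/
def IsLinRel {Ω : Type*} (r : Ω → Ω → Prop) : Prop :=
  (∀ a b, r a b ∨ r b a) ∧ (∀ a b, r a b → r b a → a = b) ∧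
    (∀ a b c, r a b → r b c → r a c)

/-- AGM contraction operator for the epistemic space `⟨E, md⟩` (postulates C1–C7,
formulated on model sets). -/
def IsContraction {Ω E : Type*} (md : E → Set Ω) (c : E → Set Ω → E) : Prop :=
  ∀ (Ψ : E) (A B : Set Ω),
    md Ψ ⊆ md (c Ψ A) ∧
    (¬ md Ψ ⊆ A → md (c Ψ A) ⊆ md Ψ) ∧
    (A ≠ Set.univ → ¬ md (c Ψ A) ⊆ A) ∧
    md (c Ψ A) ∩ A ⊆ md Ψ ∧
    md (c Ψ (A ∩ B)) ⊆ md (c Ψ A) ∪ md (c Ψ B) ∧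
    (¬ md (c Ψ (A ∩ B)) ⊆ B → md (c Ψ B) ⊆ md (c Ψ (A ∩ B)))

/-- AGM revision operator for the epistemic space `⟨E, md⟩` (postulates R1–R6,
formulated on model sets). -/
def IsRevision {Ω E : Type*} (md : E → Set Ω) (s : E → Set Ω → E) : Prop :=
  ∀ (Ψ : E) (A B : Set Ω),
    md (s Ψ A) ⊆ A ∧
    (md Ψ ∩ A ≠ ∅ → md (s Ψ A) = md Ψ ∩ A) ∧
    (A ≠ ∅ → md (s Ψ A) ≠ ∅) ∧
    md (s Ψ A) ∩ B ⊆ md (s Ψ (A ∩ B)) ∧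
    (md (s Ψ A) ∩ B ≠ ∅ → md (s Ψ (A ∩ B)) ⊆ md (s Ψ A) ∩ B)

/-- Postulate (ZC). -/
def ZC {Ω E : Type*} (md : E → Set Ω) : Prop :=
  ∀ (Ψ : E) (M : Set Ω), md Ψ ⊆ M → ∃ Ψ' : E, md Ψ' = M

/-- Postulate (ZR1). -/
def ZR1 {Ω E : Type*} (md : E → Set Ω) : Prop :=
  ∀ ω : Ω, ∃ Ψ : E, md Ψ = {ω}

/-- Postulate (ZR2). -/
def ZR2 {Ω E : Type*} (md : E → Set Ω) : Prop :=
  ∀ (Ψ : E) (M : Set Ω), M ⊆ md Ψ → ∃ Ψ' : E, md Ψ' = M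

/-- Postulate (Unbiased). -/
def Unbiased {Ω E : Type*} (md : E → Set Ω) : Prop :=
  ∀ M : Set Ω, ∃ Ψ : E, md Ψ = M

/-- Maxichoice contraction operator. -/
def IsMaxichoiceContraction {Ω E : Type*} (md : E → Set Ω) (c : E → Set Ω → E) : Prop :=
  IsContraction md c ∧
    ∀ Ψ : E, ∃ r : Ω → Ω → Prop, IsLinRel r ∧ ∀ A : Set Ω,
      (¬ md Ψ ⊆ A → md (c Ψ A) = md Ψ) ∧
      (md Ψ ⊆ A → md (c Ψ A) = md Ψ ∪ minSet r Aᶜ)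

/-- Linear contraction operator: a maxichoice contraction operator based on one
single linear order for all epistemic states. -/
def IsLinearContraction {Ω E : Type*} (md : E → Set Ω) (c : E → Set Ω → E) : Prop :=
  IsContraction md c ∧
    ∃ r : Ω → Ω → Prop, IsLinRel r ∧ ∀ (Ψ : E) (A : Set Ω),
      (¬ md Ψ ⊆ A → md (c Ψ A) = md Ψ) ∧
      (md Ψ ⊆ A → md (c Ψ A) = md Ψ ∪ minSet r Aᶜ)

/-- Full meet contraction operator. -/
def IsFullMeetContraction {Ω E : Type*} (md : E → Set Ω) (c : E → Set Ω → E) : Prop :=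
  IsContraction md c ∧
    ∀ (Ψ : E) (A : Set Ω),
      (¬ md Ψ ⊆ A → md (c Ψ A) = md Ψ) ∧
      (md Ψ ⊆ A → md (c Ψ A) = md Ψ ∪ Aᶜ)

/-- Maxichoice revision operator. -/
def IsMaxichoiceRevision {Ω E : Type*} (md : E → Set Ω) (s : E → Set Ω → E) : Prop :=
  IsRevision md s ∧
    ∀ Ψ : E, ∃ r : Ω → Ω → Prop, IsLinRel r ∧ ∀ A : Set Ω,
      (md Ψ ∩ A ≠ ∅ → md (s Ψ A) = md Ψ ∩ A) ∧
      (md Ψ ∩ A = ∅ → md (s Ψ A) = minSet r A)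

/-- Linear revision operator: a maxichoice revision operator based on one single
linear order for all epistemic states. -/
def IsLinearRevision {Ω E : Type*} (md : E → Set Ω) (s : E → Set Ω → E) : Prop :=
  IsRevision md s ∧
    ∃ r : Ω → Ω → Prop, IsLinRel r ∧ ∀ (Ψ : E) (A : Set Ω),
      (md Ψ ∩ A ≠ ∅ → md (s Ψ A) = md Ψ ∩ A) ∧
      (md Ψ ∩ A = ∅ → md (s Ψ A) = minSet r A)

/-- Full meet revision operator. -/
def IsFullMeetRevision {Ω E : Type*} (md : E → Set Ω) (s : E → Set Ω → E) : Prop :=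
  IsRevision md s ∧
    ∀ (Ψ : E) (A : Set Ω),
      (md Ψ ∩ A ≠ ∅ → md (s Ψ A) = md Ψ ∩ A) ∧
      (md Ψ ∩ A = ∅ → md (s Ψ A) = A)


/-- If `⟨E, md⟩` satisfies (ZC), then there exists a linear
contraction operator for `⟨E, md⟩`. -/
theorem exists_linearContraction_of_ZC {Ω E : Type*} [Fintype Ω] [Nonempty Ω] [Nonempty E]
    (md : E → Set Ω)
    (hZC : ZC md) :
    ∃ c : E → Set Ω → E, IsLinearContraction md c := by
  classical
  set lt : Ω → Ω → Prop := WellOrderingRel with hlt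
  have hwo : IsWellOrder Ω lt := WellOrderingRel.isWellOrder
  have hasym : ∀ a b : Ω, lt a b → ¬ lt b a := fun a b h h' =>
    (irrefl a) (Trans.trans h h')
  set r : Ω → Ω → Prop := fun a b => ¬ lt b a with hr
  have htotal : ∀ a b : Ω, r a b ∨ r b a := by
    intro a b
    by_contra h
    push_neg at h
    obtain ⟨h1, h2⟩ := h
    simp only [hr, not_not] at h1 h2
    exact hasym a b h2 h1
  have hanti : ∀ a b : Ω, r a b → r b a → a = b := by
    intro a b h1 h2
    rcases trichotomous (r := lt) a b with h | h | h
    · exact absurd h h2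
    · exact h
    · exact absurd h h1
  have htrans : ∀ a b c : Ω, r a b → r b c → r a c := by
    intro a b c h1 h2 h3
    rcases trichotomous (r := lt) a b with h | h | h
    · exact h2 (Trans.trans h3 h)
    · exact h2 (h ▸ h3)
    · exact h1 h
  have hlinr : IsLinRel r := ⟨htotal, hanti, htrans⟩
  -- minimal element of a nonempty set
  have hmin : ∀ S : Set Ω, S.Nonempty → ∃ m, m ∈ minSet r S := by
    intro S hS
    obtain ⟨m, hmS, hm⟩ := (IsWellFounded.wf (r := lt)).has_min S hS
    exact ⟨m, hmS, fun x hx => hm x hx⟩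
  have hsub : ∀ S : Set Ω, minSet r S ⊆ S := fun S x hx => hx.1
  have huniq : ∀ (S : Set Ω) (x y : Ω), x ∈ minSet r S → y ∈ minSet r S → x = y := by
    intro S x y hx hy
    exact hanti x y (hx.2 y hy.1) (hy.2 x hx.1)
  choose f hf using hZC
  refine ⟨fun Ψ A =>
    if h : md Ψ ⊆ A then f Ψ (md Ψ ∪ minSet r Aᶜ) Set.subset_union_left else Ψ, ?_, ?_⟩
  · -- IsContraction
    intro Ψ A B
    have key : ∀ C : Set Ω,
        md (if h : md Ψ ⊆ C then f Ψ (md Ψ ∪ minSet r Cᶜ) Set.subset_union_left else Ψ)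
          = if md Ψ ⊆ C then md Ψ ∪ minSet r Cᶜ else md Ψ := by
      intro C
      by_cases h : md Ψ ⊆ C
      · simp [h, hf]
      · simp [h]
    refine ⟨?_, ?_, ?_, ?_, ?_, ?_⟩
    · rw [key]; split <;> simp
    · intro h; rw [key, if_neg h]
    · intro hA
      rw [key]
      by_cases h : md Ψ ⊆ A
      · rw [if_pos h]
        obtain ⟨m, hm⟩ := hmin Aᶜ (by
          rcases Set.exists_of_ssubset (Ne.lt_of_le hA (Set.subset_univ A)) with ⟨x, _, hx⟩
          exact ⟨x, hx⟩)
        intro hcon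
        exact (hsub Aᶜ hm) (hcon (Set.mem_union_right _ hm))
      · rw [if_neg h]; exact h
    · rw [key]
      by_cases h : md Ψ ⊆ A
      · rw [if_pos h]
        rintro x ⟨hx1 | hx1, hx2⟩
        · exact hx1
        · exact absurd hx2 (hsub Aᶜ hx1)
      · rw [if_neg h]; exact fun x hx => hx.1
    · rw [key, key, key]
      by_cases h : md Ψ ⊆ A ∩ B
      · rw [if_pos h, if_pos (h.trans Set.inter_subset_left),
          if_pos (h.trans Set.inter_subset_right)]
        rintro x (hx | hx)
        · exact Or.inl (Set.mem_union_left _ hx)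
        · have hxc : x ∈ Aᶜ ∪ Bᶜ := by
            have := hx.1; rw [Set.compl_inter] at this; exact this
          rcases hxc with hxA | hxB
          · refine Or.inl (Set.mem_union_right _ ⟨hxA, fun y hy => ?_⟩)
            exact hx.2 y (by rw [Set.compl_inter]; exact Or.inl hy)
          · refine Or.inr (Set.mem_union_right _ ⟨hxB, fun y hy => ?_⟩)
            exact hx.2 y (by rw [Set.compl_inter]; exact Or.inr hy)
      · rw [if_neg h]
        intro x hx
        by_cases hA' : md Ψ ⊆ A
        · rw [if_pos hA']; exact Or.inl (Set.mem_union_left _ hx)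
        · rw [if_neg hA']; exact Or.inl hx
    · rw [key, key]
      intro hns
      by_cases h : md Ψ ⊆ A ∩ B
      · rw [if_pos h] at hns ⊢
        rw [if_pos (h.trans Set.inter_subset_right)]
        -- there is an element of minSet r (A ∩ B)ᶜ not in B
        have : ∃ m ∈ minSet r (A ∩ B)ᶜ, m ∉ B := by
          by_contra hcon
          push_neg at hcon
          apply hns
          rintro x (hx | hx)
          · exact (h.trans Set.inter_subset_right) hx
          · exact hcon x hx
        obtain ⟨m, hm, hmB⟩ := this
        have hmBc : m ∈ minSet r Bᶜ :=
          ⟨hmB, fun y hy => hm.2 y (by rw [Set.compl_inter]; exact Or.inr hy)⟩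
        rintro x (hx | hx)
        · exact Or.inl hx
        · have : x = m := huniq Bᶜ x m hx hmBc
          exact Or.inr (this ▸ hm)
      · rw [if_neg h] at hns ⊢
        have hB : ¬ md Ψ ⊆ B := fun hB' => hns fun x hx => hB' hx
        rw [if_neg hB]
  · refine ⟨r, hlinr, fun Ψ A => ⟨?_, ?_⟩⟩
    · intro h; simp [h]
    · intro h; simp [h, hf]
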